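/- arXiv:1204.4483 — 10 statements merged into one kernel-verified Lean document; each statement's English description precedes it below -/
import Mathlib

section
/- If an ordered field R satisfies the Intermediate Value Property—for every function f : [a,b] → R continuous (in the order topology) with f(a) < 0 and f(b) > 0 there is c in (a,b) with f(c) = 0—then R is Dedekind complete. -/
theorem ivp_implies_dedekind_complete
    {R : Type*} [Field R] [LinearOrder R] [IsStrictOrderedRing R] [TopologicalSpace R] [OrderTopology R]
    (hivp : ∀ (a b : R) (f : R → R), a < b → ContinuousOn f (Set.Icc a b) →
      f a < 0 → 0 < f b → ∃ c ∈ Set.Ioo a b, f c = 0) :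
    ∀ S : Set R, S.Nonempty → BddAbove S → ∃ c : R, IsLUB S c := by
  intro S hS hBdd
  by_contra hno
  push_neg at hno
  obtain ⟨s, hs⟩ := hS
  obtain ⟨b, hb⟩ := hBdd
  classical
  set f : R → R := fun x => if x ∈ upperBounds S then 1 else -1 with hf
  have hcont : Continuous f := by
    rw [continuous_iff_continuousAt]
    intro x
    by_cases hx : x ∈ upperBounds S
    · have hnl : ¬ IsLUB S x := hno x
      have hexy : ∃ y ∈ upperBounds S, y < x := by
        by_contra h
        push_neg at h
        exact hnl ⟨hx, fun y hy => h y hy⟩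
      obtain ⟨y, hy, hyx⟩ := hexy
      have heq : f =ᶠ[nhds x] fun _ => (1 : R) := by
        filter_upwards [Ioi_mem_nhds hyx] with z hz
        simp only [hf]
        exact if_pos (fun t ht => le_trans (hy ht) (le_of_lt hz))
      exact continuousAt_const.congr heq.symm
    · have hexs : ∃ t ∈ S, x < t := by
        by_contra h
        push_neg at h
        exact hx h
      obtain ⟨t, ht, hxt⟩ := hexs
      have heq : f =ᶠ[nhds x] fun _ => (-1 : R) := by
        filter_upwards [Iio_mem_nhds hxt] with z hz
        simp only [hf]
        refine if_neg (fun hub => ?_)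
        exact absurd (hub ht) (not_le.mpr hz)
      exact continuousAt_const.congr heq.symm
  have hab : s - 1 < b := lt_of_lt_of_le (by linarith) (hb hs)
  have hfa : f (s - 1) < 0 := by
    simp only [hf]
    rw [if_neg]
    · norm_num
    · intro hub
      exact absurd (hub hs) (by linarith)
  have hfb : 0 < f b := by
    simp only [hf]
    rw [if_pos hb]
    norm_num
  obtain ⟨c, _, hc⟩ := hivp (s - 1) b f hab hcont.continuousOn hfa hfb
  simp only [hf] at hc
  by_cases h : c ∈ upperBounds S
  · rw [if_pos h] at hc; exact one_ne_zero hc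
  · rw [if_neg h] at hc; norm_num at hc
end

section
/- If an ordered field R satisfies the Extreme Value Property—every continuous function f : [a,b] → R attains a maximum on [a,b]—then R is Dedekind complete. -/
theorem evp_implies_dedekind_complete
    {R : Type*} [Field R] [LinearOrder R] [IsStrictOrderedRing R] [TopologicalSpace R] [OrderTopology R]
    (hevp : ∀ (a b : R) (f : R → R), a ≤ b → ContinuousOn f (Set.Icc a b) →
      ∃ c ∈ Set.Icc a b, ∀ x ∈ Set.Icc a b, f x ≤ f c) :
    ∀ S : Set R, S.Nonempty → BddAbove S → ∃ c : R, IsLUB S c := by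
  intro S ⟨a, haS⟩ ⟨b, hb⟩
  by_contra hno
  push_neg at hno
  -- B := upperBounds S is closed
  have hBclosed : IsClosed (upperBounds S) := by
    have : upperBounds S = ⋂ s ∈ S, Set.Ici s := by
      ext x; simp [upperBounds, Set.mem_iInter]
    rw [this]
    exact isClosed_biInter fun s _ => isClosed_Ici
  -- B is open since there is no least upper bound
  have hBopen : IsOpen (upperBounds S) := by
    rw [isOpen_iff_mem_nhds]
    intro u hu
    obtain ⟨v, hv, hvu⟩ : ∃ v ∈ upperBounds S, v < u := by
      by_contra h
      push_neg at h
      exact hno u ⟨hu, fun v hv => h v hv⟩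
    have : Set.Ioi v ⊆ upperBounds S := fun x hx s hs => le_trans (hv hs) (le_of_lt hx)
    exact Filter.mem_of_superset (Ioi_mem_nhds hvu) this
  have hclopen : IsClopen (upperBounds S) := ⟨hBclosed, hBopen⟩
  -- a is not an upper bound (else it would be the LUB)
  have haA : a ∉ upperBounds S := fun h => hno a ⟨h, fun v hv => hv haS⟩
  have hab : a ≤ b := hb haS
  classical
  set f : R → R := fun x => if x ∈ upperBounds S then 2 * a - x else x with hf
  have hcont : Continuous f := by
    apply Continuous.if
    · intro x hx
      have he : frontier {x | x ∈ upperBounds S} = (∅ : Set R) := by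
        simpa using hclopen.frontier_eq
      rw [he] at hx
      exact absurd hx (Set.notMem_empty x)
    · exact (continuous_const.sub continuous_id)
    · exact continuous_id
  obtain ⟨c, hc, hmax⟩ := hevp a b f hab hcont.continuousOn
  -- helper: from a non-upper-bound x < b, produce a strictly bigger non-upper-bound in [a,b]
  have step : ∀ x, x ∈ Set.Icc a b → x ∉ upperBounds S →
      ∃ y ∈ Set.Icc a b, y ∉ upperBounds S ∧ x < y := by
    intro x hx hxA
    obtain ⟨s, hs, hxs⟩ : ∃ s ∈ S, x < s := by
      by_contra h; push_neg at h; exact hxA fun s hs => h s hs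
    refine ⟨(x + s) / 2, ⟨le_trans hx.1 (by linarith), le_trans (by linarith) (hb hs)⟩,
      fun h => absurd (h hs) (by push_neg; linarith), by linarith⟩
  by_cases hcB : c ∈ upperBounds S
  · -- f c = 2a - c ≤ a, but there is a point y > a not an upper bound with f y = y > a
    obtain ⟨y, hy, hyA, hay⟩ := step a ⟨le_refl a, hab⟩ haA
    have h1 : f y ≤ f c := hmax y hy
    simp only [hf, if_pos hcB, if_neg hyA] at h1
    have := hc.1
    linarith
  · obtain ⟨y, hy, hyA, hcy⟩ := step c hc hcB
    have h1 : f y ≤ f c := hmax y hy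
    simp only [hf, if_neg hcB, if_neg hyA] at h1
    linarith
end

section
/- If an ordered field R satisfies the Constant Value Property—every function f : [a,b] → R continuous on [a,b] and differentiable on (a,b) with derivative identically 0 is constant on [a,b]—then R is Dedekind complete. -/
/-- `f` has derivative `L` at `c`, in the ε-δ sense relative to the ordered field `R`. -/
def HasDerivAtField {R : Type*} [Field R] [LinearOrder R] [IsStrictOrderedRing R] (f : R → R) (L c : R) : Prop :=
  ∀ ε : R, 0 < ε → ∃ δ : R, 0 < δ ∧ ∀ x : R, x ≠ c → |x - c| < δ →
    |(f x - f c) / (x - c) - L| < ε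

theorem constant_value_property_implies_dedekind_complete
    {R : Type*} [Field R] [LinearOrder R] [IsStrictOrderedRing R] [TopologicalSpace R] [OrderTopology R]
    (hcvp : ∀ (a b : R) (f : R → R), a < b → ContinuousOn f (Set.Icc a b) →
      (∀ x ∈ Set.Ioo a b, HasDerivAtField f 0 x) →
      ∀ x ∈ Set.Icc a b, f x = f a) :
    ∀ S : Set R, S.Nonempty → BddAbove S → ∃ c : R, IsLUB S c := by
  classical
  intro S hne hbdd
  by_contra h
  push_neg at h
  set U := upperBounds S with hU
  set f : R → R := fun x => if x ∈ U then (1 : R) else 0 with hf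
  -- f is locally constant
  have hloc : ∀ c : R, ∃ δ : R, 0 < δ ∧ ∀ x : R, |x - c| < δ → f x = f c := by
    intro c
    by_cases hc : c ∈ U
    · -- c is an upper bound, not the least one
      have : ¬ c ∈ lowerBounds U := by
        intro hcl
        exact h c ⟨hc, hcl⟩
      simp only [lowerBounds, Set.mem_setOf_eq] at this
      push_neg at this
      obtain ⟨u, hu, huc⟩ := this
      have huc' : u < c := lt_of_not_ge (by simpa using huc)
      refine ⟨c - u, by linarith, ?_⟩
      intro x hx
      rw [abs_lt] at hx
      have hxu : u < x := by linarith [hx.1]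
      have hxU : x ∈ U := fun s hs => le_trans (hu hs) hxu.le
      simp [hf, hxU, hc]
    · -- c is not an upper bound
      obtain ⟨s, hs, hcs⟩ : ∃ s ∈ S, c < s := by
        simp only [hU, upperBounds, Set.mem_setOf_eq] at hc
        push_neg at hc
        exact hc
      refine ⟨s - c, by linarith, ?_⟩
      intro x hx
      rw [abs_lt] at hx
      have hxs : x < s := by linarith [hx.2]
      have hxU : x ∉ U := fun hxU => absurd (hxU hs) (not_le.mpr hxs)
      simp [hf, hxU, hc]
  -- hence continuous
  have hcont : Continuous f := by
    rw [continuous_iff_continuousAt]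
    intro c
    obtain ⟨δ, hδ, hδc⟩ := hloc c
    have hmem : Set.Ioo (c - δ) (c + δ) ∈ nhds c :=
      Ioo_mem_nhds (by linarith) (by linarith)
    have heq : f =ᶠ[nhds c] fun _ => f c := by
      filter_upwards [hmem] with x hx
      exact hδc x (abs_lt.mpr ⟨by linarith [hx.1], by linarith [hx.2]⟩)
    exact ContinuousAt.congr continuousAt_const heq.symm
  -- and has derivative 0 everywhere
  have hderiv : ∀ c : R, HasDerivAtField f 0 c := by
    intro c ε hε
    obtain ⟨δ, hδ, hδc⟩ := hloc c
    refine ⟨δ, hδ, ?_⟩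
    intro x hx hxδ
    rw [hδc x hxδ]
    simpa using hε
  -- pick points where f differs
  obtain ⟨s, hs⟩ := hne
  obtain ⟨b, hb⟩ := hbdd
  have hab : s - 1 < b := by
    have := hb hs; linarith
  have hfa : f (s - 1) = 0 := by
    have : s - 1 ∉ U := fun hmem => absurd (hmem hs) (by linarith)
    simp [hf, this]
  have hfb : f b = 1 := by simp [hf, hU, hb]
  have := hcvp (s - 1) b f hab hcont.continuousOn
    (fun x _ => hderiv x) b (Set.mem_Icc.mpr ⟨hab.le, le_refl b⟩)
  rw [hfa, hfb] at this
  exact one_ne_zero this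
end

section
/- If every bounded monotone increasing sequence in an ordered field R converges, then R is Dedekind complete. -/
open scoped Classical in
noncomputable def bisectMC {R : Type*} [Field R] [LinearOrder R] [IsStrictOrderedRing R] (S : Set R) (x0 b0 : R) :
    ℕ → R × R
  | 0 => (x0, b0)
  | n+1 =>
    let p := bisectMC S x0 b0 n
    if (p.1 + p.2) / 2 ∈ upperBounds S then (p.1, (p.1 + p.2) / 2)
    else ((p.1 + p.2) / 2, p.2)

theorem monotone_convergence_implies_dedekind_complete
    {R : Type*} [Field R] [LinearOrder R] [IsStrictOrderedRing R]
    (hmono : ∀ a : ℕ → R, Monotone a → BddAbove (Set.range a) →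
      ∃ L : R, ∀ ε : R, 0 < ε → ∃ N : ℕ, ∀ n ≥ N, |a n - L| < ε) :
    ∀ S : Set R, S.Nonempty → BddAbove S → ∃ c : R, IsLUB S c := by
  classical
  -- Step 1: R is Archimedean-like: ℕ is unbounded in R.
  have harch : ∀ B : R, ∃ n : ℕ, B < (n : R) := by
    intro B
    by_contra h
    push_neg at h
    obtain ⟨L, hL⟩ := hmono (fun n => (n : R))
      (fun m n hmn => by simp only []; exact_mod_cast hmn)
      ⟨B, fun x ⟨n, hn⟩ => hn ▸ h n⟩
    obtain ⟨N, hN⟩ := hL (1/2) (by norm_num)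
    have h1 := hN N (le_refl N)
    have h2 := hN (N+1) (Nat.le_succ N)
    have : (1 : R) = |((N:R)+1 - L) - ((N:R) - L)| := by
      push_cast; ring_nf; simp
    have hlt : (1:R) < 1 := by
      calc (1:R) = |((N:R)+1 - L) - ((N:R) - L)| := this
        _ ≤ |((N:R)+1 - L)| + |((N:R) - L)| := abs_sub _ _
        _ < 1/2 + 1/2 := by
            push_cast at h2 ⊢
            exact add_lt_add h2 h1
        _ = 1 := by norm_num
    exact absurd hlt (lt_irrefl 1)
  intro S ⟨x0, hx0⟩ ⟨b0, hb0⟩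
  set p : ℕ → R × R := bisectMC S x0 b0 with hp
  set a : ℕ → R := fun n => (p n).1 with ha
  set b : ℕ → R := fun n => (p n).2 with hb
  -- invariants
  have hinv : ∀ n, (∃ s ∈ S, a n ≤ s) ∧ (b n ∈ upperBounds S) ∧
      b n - a n = (b0 - x0) / 2 ^ n := by
    intro n
    induction n with
    | zero => exact ⟨⟨x0, hx0, le_refl _⟩, hb0, by simp [ha, hb, hp, bisectMC]⟩
    | succ n ih =>
      obtain ⟨⟨s, hs, has⟩, hub, hdiff⟩ := ih
      have hstep : p (n+1) =
          if (a n + b n) / 2 ∈ upperBounds S then (a n, (a n + b n) / 2)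
          else ((a n + b n) / 2, b n) := by
        simp [hp, ha, hb, bisectMC]
      by_cases hm : (a n + b n) / 2 ∈ upperBounds S
      · have hpn : p (n+1) = (a n, (a n + b n) / 2) := by rw [hstep, if_pos hm]
        refine ⟨⟨s, hs, ?_⟩, ?_, ?_⟩
        · show (p (n+1)).1 ≤ s; rw [hpn]; exact has
        · show (p (n+1)).2 ∈ upperBounds S; rw [hpn]; exact hm
        · show (p (n+1)).2 - (p (n+1)).1 = _
          rw [hpn]
          simp only []
          have : (a n + b n) / 2 - a n = (b n - a n) / 2 := by ring
          rw [this, hdiff]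
          ring
      · have hpn : p (n+1) = ((a n + b n) / 2, b n) := by rw [hstep, if_neg hm]
        obtain ⟨t, ht, hat⟩ : ∃ t ∈ S, (a n + b n) / 2 ≤ t := by
          by_contra h
          push_neg at h
          exact hm fun x hx => (h x hx).le
        refine ⟨⟨t, ht, ?_⟩, ?_, ?_⟩
        · show (p (n+1)).1 ≤ t; rw [hpn]; exact hat
        · show (p (n+1)).2 ∈ upperBounds S; rw [hpn]; exact hub
        · show (p (n+1)).2 - (p (n+1)).1 = _
          rw [hpn]
          simp only []
          have : b n - (a n + b n) / 2 = (b n - a n) / 2 := by ring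
          rw [this, hdiff]
          ring
  have hab : ∀ n, a n ≤ b n := by
    intro n
    have h1 := (hinv n).1
    have h2 := (hinv n).2.1
    obtain ⟨s, hs, has⟩ := h1
    exact has.trans (h2 hs)
  have hamono : Monotone a := by
    apply monotone_nat_of_le_succ
    intro n
    have hstep : p (n+1) =
        if (a n + b n) / 2 ∈ upperBounds S then (a n, (a n + b n) / 2)
        else ((a n + b n) / 2, b n) := by
      simp [hp, ha, hb, bisectMC]
    by_cases hm : (a n + b n) / 2 ∈ upperBounds S
    · show a n ≤ (p (n+1)).1; rw [hstep, if_pos hm]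
    · show a n ≤ (p (n+1)).1; rw [hstep, if_neg hm]
      have := hab n; linarith
  have hbanti : ∀ n, b n ≤ b0 := by
    have step : ∀ n, b (n+1) ≤ b n := by
      intro n
      have hstep : p (n+1) =
          if (a n + b n) / 2 ∈ upperBounds S then (a n, (a n + b n) / 2)
          else ((a n + b n) / 2, b n) := by
        simp [hp, ha, hb, bisectMC]
      by_cases hm : (a n + b n) / 2 ∈ upperBounds S
      · show (p (n+1)).2 ≤ b n; rw [hstep, if_pos hm]
        have := hab n; simp only []; linarith
      · show (p (n+1)).2 ≤ b n; rw [hstep, if_neg hm]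
    intro n
    induction n with
    | zero => exact le_of_eq rfl
    | succ n ih => exact (step n).trans ih
  have hbdd : BddAbove (Set.range a) := by
    refine ⟨b0, ?_⟩
    rintro x ⟨n, rfl⟩
    exact (hab n).trans (hbanti n)
  obtain ⟨L, hL⟩ := hmono a hamono hbdd
  -- the gaps tend to zero
  have hgap : ∀ ε : R, 0 < ε → ∃ n : ℕ, (b0 - x0) / 2 ^ n < ε := by
    intro ε hε
    obtain ⟨n, hn⟩ := harch ((b0 - x0) / ε)
    refine ⟨n, ?_⟩
    have h2n : (n : R) < 2 ^ n := by
      exact_mod_cast Nat.lt_two_pow_self (n := n)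
    have hpow : (0 : R) < 2 ^ n := by positivity
    rw [div_lt_iff₀ hpow]
    have : (b0 - x0) / ε < 2 ^ n := hn.trans h2n
    calc b0 - x0 = (b0 - x0) / ε * ε := by field_simp
      _ < 2 ^ n * ε := by exact mul_lt_mul_of_pos_right this hε
      _ = ε * 2 ^ n := by ring
  refine ⟨L, ?_, ?_⟩
  · -- L is an upper bound
    intro s hs
    by_contra h
    push_neg at h
    have hε : 0 < (s - L) / 2 := by linarith
    obtain ⟨N1, hN1⟩ := hL _ hε
    obtain ⟨N2, hN2⟩ := hgap _ hε
    set n := max N1 N2 with hn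
    have h1 := hN1 n (le_max_left _ _)
    have hdiff := (hinv n).2.2
    have hub := (hinv n).2.1
    have hx0b0 : x0 ≤ b0 := hb0 hx0
    have hmono2 : (b0 - x0) / 2 ^ n ≤ (b0 - x0) / 2 ^ N2 := by
      apply div_le_div_of_nonneg_left (by linarith) (by positivity)
      exact pow_le_pow_right₀ (by norm_num) (le_max_right _ _)
    have hbn : b n < s := by
      have habs := abs_lt.mp h1
      have : b n = a n + (b0 - x0) / 2 ^ n := by linarith
      rw [this]
      calc a n + (b0 - x0) / 2 ^ n < (L + (s - L) / 2) + (s - L) / 2 := by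
            have := hmono2.trans_lt hN2
            linarith [habs.2]
        _ = s := by ring
    exact absurd (hub hs) (not_le.mpr hbn)
  · -- L is the least upper bound
    intro u hu
    by_contra h
    push_neg at h
    have hε : 0 < L - u := by linarith
    obtain ⟨N, hN⟩ := hL _ hε
    have h1 := abs_lt.mp (hN N (le_refl N))
    obtain ⟨s, hs, has⟩ := (hinv N).1
    have : a N ≤ u := has.trans (hu hs)
    linarith [h1.1]
end

section
/- If an ordered field R has the Fixed Point Property for closed bounded intervals—every continuous map f : [a,b] → [a,b] with a ≤ b has a fixed point—then R is Dedekind complete. -/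
theorem fixed_point_property_implies_dedekind_complete
    {R : Type*} [Field R] [LinearOrder R] [IsStrictOrderedRing R] [TopologicalSpace R] [OrderTopology R]
    (hfix : ∀ (a b : R) (f : R → R), a ≤ b → ContinuousOn f (Set.Icc a b) →
      Set.MapsTo f (Set.Icc a b) (Set.Icc a b) →
      ∃ x ∈ Set.Icc a b, f x = x) :
    ∀ S : Set R, S.Nonempty → BddAbove S → ∃ c : R, IsLUB S c := by
  intro S hne hbdd
  by_contra hno
  push_neg at hno
  obtain ⟨a, haS⟩ := hne
  obtain ⟨b, hb⟩ := hbdd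
  have hab : a ≤ b := hb haS
  have hnub : ∀ x, x ∈ upperBounds S → ∃ y ∈ upperBounds S, y < x := by
    intro x hx
    by_contra h
    push_neg at h
    exact hno x ⟨hx, fun y hy => h y hy⟩
  classical
  set f : R → R := fun x => if x ∈ upperBounds S then a else b with hf
  have ha : a ∉ upperBounds S := by
    intro h
    exact hno a ⟨h, fun y hy => hy haS⟩
  have hab' : a < b := lt_of_le_of_ne hab (by rintro rfl; exact ha hb)
  have hcont : ∀ x ∈ Set.Icc a b, ContinuousAt f x := by
    intro x _
    by_cases hxu : x ∈ upperBounds S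
    · obtain ⟨y, hy, hyx⟩ := hnub x hxu
      have hev : f =ᶠ[nhds x] (fun _ => a) := by
        filter_upwards [Ioi_mem_nhds hyx] with z hz
        simp only [hf]
        exact if_pos (fun s hs => (hy hs).trans (le_of_lt hz))
      exact continuousAt_const.congr hev.symm
    · have hxu' := hxu
      rw [upperBounds, Set.mem_setOf_eq] at hxu'
      push_neg at hxu'
      obtain ⟨s, hsS, hxs⟩ := hxu'
      have hev : f =ᶠ[nhds x] (fun _ => b) := by
        filter_upwards [Iio_mem_nhds hxs] with z hz
        simp only [hf]
        exact if_neg (fun h => absurd (h hsS) (not_le.mpr hz))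
      exact continuousAt_const.congr hev.symm
  have hmaps : Set.MapsTo f (Set.Icc a b) (Set.Icc a b) := by
    intro x _
    simp only [hf]
    split
    · exact ⟨le_refl a, hab⟩
    · exact ⟨hab, le_refl b⟩
  obtain ⟨x, hx, hfx⟩ := hfix a b f hab
    (fun x hx => (hcont x hx).continuousWithinAt) hmaps
  by_cases hxu : x ∈ upperBounds S
  · have : f x = a := if_pos hxu
    rw [hfx] at this
    rw [this] at hxu
    exact ha hxu
  · have : f x = b := if_neg hxu
    rw [hfx] at this
    rw [this] at hxu
    exact hxu hb
end

section
/- If an ordered field R satisfies the Ratio Test—whenever a sequence (a_n) in R has |a_{n+1}/a_n| → L with L < 1, the series Σ a_n converges in R—then R is Archimedean. -/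
theorem ratio_test_implies_archimedean
    {R : Type*} [Field R] [LinearOrder R] [IsStrictOrderedRing R]
    (hratio : ∀ (a : ℕ → R) (L : R), (∀ n, a n ≠ 0) →
      (∀ ε : R, 0 < ε → ∃ N : ℕ, ∀ n ≥ N, |(|a (n + 1) / a n|) - L| < ε) →
      L < 1 →
      ∃ S : R, ∀ ε : R, 0 < ε → ∃ N : ℕ, ∀ n ≥ N,
        |(∑ k ∈ Finset.range n, a k) - S| < ε) :
    ∀ x : R, ∃ n : ℕ, x < (n : R) := by
  intro x
  set a : ℕ → R := fun n => (1/2 : R) ^ n with ha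
  have hhalf : (0:R) < 1/2 := by norm_num
  have hne : ∀ n, a n ≠ 0 := fun n => pow_ne_zero n (by norm_num)
  have hrat : ∀ ε : R, 0 < ε → ∃ N : ℕ, ∀ n ≥ N, |(|a (n + 1) / a n|) - (1/2 : R)| < ε := by
    intro ε hε
    refine ⟨0, fun n _ => ?_⟩
    have : a (n+1) / a n = 1/2 := by
      simp [ha, pow_succ, mul_div_assoc, div_self (pow_ne_zero n (show (1/2:R) ≠ 0 by norm_num))]
    rw [this, abs_of_pos hhalf, sub_self, abs_zero]
    exact hε
  obtain ⟨S, hS⟩ := hratio a (1/2) hne hrat (by norm_num)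
  -- let y = max x 1 > 0
  set y : R := max x 1 with hy
  have hy0 : (0:R) < y := lt_of_lt_of_le one_pos (le_max_right _ _)
  have hε : (0:R) < 1 / (4 * y) := by positivity
  obtain ⟨N, hN⟩ := hS (1/(4*y)) hε
  have h1 := hN N (le_refl N)
  have h2 := hN (N+1) (Nat.le_succ N)
  have hdiff : (∑ k ∈ Finset.range (N+1), a k) - (∑ k ∈ Finset.range N, a k) = a N := by
    rw [Finset.sum_range_succ]; ring
  have key : a N < 2 * (1/(4*y)) := by
    have : |a N| < 1/(4*y) + 1/(4*y) := by
      calc |a N| = |((∑ k ∈ Finset.range (N+1), a k) - S) - ((∑ k ∈ Finset.range N, a k) - S)| := by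
            rw [show ((∑ k ∈ Finset.range (N+1), a k) - S) - ((∑ k ∈ Finset.range N, a k) - S)
              = (∑ k ∈ Finset.range (N+1), a k) - (∑ k ∈ Finset.range N, a k) by ring, hdiff]
        _ ≤ |(∑ k ∈ Finset.range (N+1), a k) - S| + |(∑ k ∈ Finset.range N, a k) - S| :=
            abs_sub _ _
        _ < 1/(4*y) + 1/(4*y) := add_lt_add h2 h1
    have haN : |a N| = a N := abs_of_pos (pow_pos hhalf N)
    rw [haN] at this
    linarith
  -- so (1/2)^N < 1/(2y), i.e. y < 2^N / 2 ≤ 2^N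
  have h2y : (1/2:R)^N < 1/(2*y) := by
    have : 2 * (1/(4*y)) = 1/(2*y) := by field_simp; ring
    rw [← this]; exact key
  have hpow : y < (2:R)^N := by
    have hposp : (0:R) < (1/2:R)^N := pow_pos hhalf N
    have h2p : (0:R) < (2:R)^N := pow_pos two_pos N
    have hinv : (1/2:R)^N = 1 / (2:R)^N := by
      rw [div_pow, one_pow]
    rw [hinv] at h2y
    have := (div_lt_div_iff₀ h2p (by positivity : (0:R) < 2*y)).mp h2y
    nlinarith
  refine ⟨2^N, ?_⟩
  have : ((2^N : ℕ) : R) = (2:R)^N := by push_cast; ring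
  rw [this]
  exact lt_of_le_of_lt (le_max_left x 1) hpow
end

section
/- If an ordered field R satisfies the Ratio Test, then R is Dedekind complete. -/
open scoped Classical

noncomputable def bisAux {R : Type*} [Field R] [LinearOrder R] [IsStrictOrderedRing R] (S : Set R) (p : R × R) : ℕ → R × R
  | 0 => p
  | n+1 =>
    let q := bisAux S p n
    let m := (q.1 + q.2)/2
    if m ∈ upperBounds S then (q.1, m) else (m, q.2)

noncomputable def midAux {R : Type*} [Field R] [LinearOrder R] [IsStrictOrderedRing R] (S : Set R) (p : R × R) (n : ℕ) : R :=
  ((bisAux S p n).1 + (bisAux S p n).2)/2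

lemma bisAux_succ {R : Type*} [Field R] [LinearOrder R] [IsStrictOrderedRing R] (S : Set R) (p : R × R) (n : ℕ) :
    bisAux S p (n+1) =
      if ((bisAux S p n).1 + (bisAux S p n).2)/2 ∈ upperBounds S
      then ((bisAux S p n).1, ((bisAux S p n).1 + (bisAux S p n).2)/2)
      else (((bisAux S p n).1 + (bisAux S p n).2)/2, (bisAux S p n).2) := by
  classical
  simp [bisAux]

lemma bisAux_gap {R : Type*} [Field R] [LinearOrder R] [IsStrictOrderedRing R] (S : Set R) (p : R × R) (n : ℕ) :
    (bisAux S p n).2 - (bisAux S p n).1 = (p.2 - p.1)/2^n := by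
  induction n with
  | zero => simp [bisAux]
  | succ n ih =>
    rw [bisAux_succ]
    split
    · have : ((bisAux S p n).1 + (bisAux S p n).2)/2 - (bisAux S p n).1
          = ((bisAux S p n).2 - (bisAux S p n).1)/2 := by ring
      simp only [this, ih, pow_succ]
      ring
    · have : (bisAux S p n).2 - ((bisAux S p n).1 + (bisAux S p n).2)/2
          = ((bisAux S p n).2 - (bisAux S p n).1)/2 := by ring
      simp only [this, ih, pow_succ]
      ring

lemma midAux_step {R : Type*} [Field R] [LinearOrder R] [IsStrictOrderedRing R] (S : Set R) (p : R × R)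
    (h : p.1 < p.2) (n : ℕ) :
    |midAux S p (n+1) - midAux S p n| = (p.2 - p.1)/2^(n+2) := by
  have hgap : (bisAux S p n).2 - (bisAux S p n).1 = (p.2 - p.1)/2^n := bisAux_gap S p n
  have hsub : (0:R) < p.2 - p.1 := sub_pos.mpr h
  have hpos : (0:R) < (p.2 - p.1)/2^n := by positivity
  unfold midAux
  rw [bisAux_succ]
  split
  · simp only
    have : ((bisAux S p n).1 + ((bisAux S p n).1 + (bisAux S p n).2)/2)/2
        - ((bisAux S p n).1 + (bisAux S p n).2)/2
        = -(((bisAux S p n).2 - (bisAux S p n).1)/4) := by ring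
    rw [this, abs_neg, abs_of_pos (by rw [hgap]; positivity), hgap, pow_succ, pow_succ]
    ring
  · simp only
    have : (((bisAux S p n).1 + (bisAux S p n).2)/2 + (bisAux S p n).2)/2
        - ((bisAux S p n).1 + (bisAux S p n).2)/2
        = ((bisAux S p n).2 - (bisAux S p n).1)/4 := by ring
    rw [this, abs_of_pos (by rw [hgap]; positivity), hgap, pow_succ, pow_succ]
    ring

lemma bisAux_ub {R : Type*} [Field R] [LinearOrder R] [IsStrictOrderedRing R] (S : Set R) (p : R × R)
    (hub : p.2 ∈ upperBounds S) : ∀ n, (bisAux S p n).2 ∈ upperBounds S := by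
  intro n
  induction n with
  | zero => exact hub
  | succ n ih =>
    rw [bisAux_succ]
    split
    · next h => exact h
    · exact ih

lemma bisAux_lo {R : Type*} [Field R] [LinearOrder R] [IsStrictOrderedRing R] (S : Set R) (p : R × R)
    (hlo : ∃ s ∈ S, p.1 ≤ s) : ∀ n, ∃ s ∈ S, (bisAux S p n).1 ≤ s := by
  intro n
  induction n with
  | zero => exact hlo
  | succ n ih =>
    rw [bisAux_succ]
    split
    · exact ih
    · next h =>
      simp only [upperBounds, Set.mem_setOf_eq] at h
      push_neg at h
      obtain ⟨s, hs, hlt⟩ := h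
      exact ⟨s, hs, le_of_lt hlt⟩

theorem ratio_test_implies_dedekind_complete
    {R : Type*} [Field R] [LinearOrder R] [IsStrictOrderedRing R]
    (hratio : ∀ (a : ℕ → R) (L : R), (∀ n, a n ≠ 0) →
      (∀ ε : R, 0 < ε → ∃ N : ℕ, ∀ n ≥ N, |(|a (n + 1) / a n|) - L| < ε) →
      L < 1 →
      ∃ S : R, ∀ ε : R, 0 < ε → ∃ N : ℕ, ∀ n ≥ N,
        |(∑ k ∈ Finset.range n, a k) - S| < ε) :
    ∀ S : Set R, S.Nonempty → BddAbove S → ∃ c : R, IsLUB S c := by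
  -- Step 1: (1/2)^n tends to 0.
  have htend : ∀ ε : R, 0 < ε → ∃ N : ℕ, ∀ n ≥ N, (1/2:R)^n < ε := by
    obtain ⟨T, hT⟩ := hratio (fun n => (1/2:R)^n) (1/2)
      (fun n => by positivity)
      (by
        intro ε hε
        refine ⟨0, fun n _ => ?_⟩
        have : ((1/2:R)^(n+1) / (1/2)^n) = 1/2 := by
          rw [pow_succ]
          field_simp
        rw [this, abs_of_pos (by norm_num : (0:R) < 1/2)]
        simpa using hε)
      (by norm_num)
    intro ε hε
    obtain ⟨N, hN⟩ := hT (ε/2) (by positivity)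
    refine ⟨N, fun n hn => ?_⟩
    have h1 := hN (n+1) (by omega)
    have h2 := hN n hn
    have heq : (1/2:R)^n
        = ((∑ k ∈ Finset.range (n+1), (1/2:R)^k) - T) - ((∑ k ∈ Finset.range n, (1/2:R)^k) - T) := by
      rw [Finset.sum_range_succ]; ring
    calc (1/2:R)^n
        = ((∑ k ∈ Finset.range (n+1), (1/2:R)^k) - T) - ((∑ k ∈ Finset.range n, (1/2:R)^k) - T) := heq
      _ ≤ |((∑ k ∈ Finset.range (n+1), (1/2:R)^k) - T) - ((∑ k ∈ Finset.range n, (1/2:R)^k) - T)| :=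
          le_abs_self _
      _ ≤ |(∑ k ∈ Finset.range (n+1), (1/2:R)^k) - T| + |(∑ k ∈ Finset.range n, (1/2:R)^k) - T| :=
          abs_sub _ _
      _ < ε/2 + ε/2 := add_lt_add h1 h2
      _ = ε := by ring
  -- Setup bisection
  intro S hne hbdd
  obtain ⟨x, hx⟩ := hne
  obtain ⟨b, hb⟩ := hbdd
  set p : R × R := (x, b + 1) with hp
  have hplt : p.1 < p.2 := by
    show x < b + 1
    linarith [hb hx]
  set d : R := p.2 - p.1 with hd
  have hdpos : 0 < d := by
    show (0:R) < b + 1 - x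
    linarith [hb hx]
  have hub : p.2 ∈ upperBounds S := fun s hs => by
    show s ≤ b + 1
    linarith [hb hs]
  have hlo : ∃ s ∈ S, p.1 ≤ s := ⟨x, hx, le_refl _⟩
  -- Step 2: midpoint series converges
  set a : ℕ → R := fun n => midAux S p (n+1) - midAux S p n with ha
  have habs : ∀ n, |a n| = d/2^(n+2) := fun n => midAux_step S p hplt n
  have hne0 : ∀ n, a n ≠ 0 := by
    intro n h
    have h1 := habs n
    rw [h, abs_zero] at h1
    have h2 : (0:R) < d/2^(n+2) := by positivity
    linarith
  obtain ⟨T, hT⟩ := hratio a (1/2) hne0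
    (by
      intro ε hε
      refine ⟨0, fun n _ => ?_⟩
      have : |a (n+1) / a n| = 1/2 := by
        rw [abs_div, habs, habs]
        have hd0 : d ≠ 0 := ne_of_gt hdpos
        have h2 : ((2:R)^(n+2)) ≠ 0 := by positivity
        rw [show n+1+2 = (n+2)+1 from rfl, pow_succ, div_div_div_comm, div_self hd0]
        rw [mul_comm, mul_div_assoc, div_self h2]
        norm_num
      rw [this]
      simpa using hε)
    (by norm_num)
  set c : R := T + midAux S p 0 with hc
  have hmid : ∀ ε : R, 0 < ε → ∃ N : ℕ, ∀ n ≥ N, |midAux S p n - c| < ε := by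
    intro ε hε
    obtain ⟨N, hN⟩ := hT ε hε
    refine ⟨N, fun n hn => ?_⟩
    have := hN n hn
    have hsum : (∑ k ∈ Finset.range n, a k) = midAux S p n - midAux S p 0 :=
      Finset.sum_range_sub (fun k => midAux S p k) n
    rw [hsum] at this
    have heq : midAux S p n - midAux S p 0 - T = midAux S p n - c := by
      rw [hc]; ring
    rwa [heq] at this
  -- distance from mid to lo/hi
  have hhalf : ∀ n, (bisAux S p n).2 - midAux S p n = d/2^(n+1) ∧
      midAux S p n - (bisAux S p n).1 = d/2^(n+1) := by
    intro n
    have hgap := bisAux_gap S p n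
    constructor
    · unfold midAux
      have : (bisAux S p n).2 - ((bisAux S p n).1 + (bisAux S p n).2)/2
          = ((bisAux S p n).2 - (bisAux S p n).1)/2 := by ring
      rw [this, hgap, pow_succ]
      rw [hd]; ring
    · unfold midAux
      have : ((bisAux S p n).1 + (bisAux S p n).2)/2 - (bisAux S p n).1
          = ((bisAux S p n).2 - (bisAux S p n).1)/2 := by ring
      rw [this, hgap, pow_succ]
      rw [hd]; ring
  -- key: for any ε>0 there is n with hi_n < c + ε and lo_n > c - ε
  have hkey : ∀ ε : R, 0 < ε → ∃ n : ℕ,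
      (bisAux S p n).2 < c + ε ∧ c - ε < (bisAux S p n).1 := by
    intro ε hε
    obtain ⟨N₁, hN₁⟩ := hmid (ε/2) (by positivity)
    obtain ⟨N₂, hN₂⟩ := htend (ε/(2*d)) (by positivity)
    refine ⟨N₁ + N₂ + 1, ?_, ?_⟩
    · have h1 := hN₁ _ (by omega : N₁ + N₂ + 1 ≥ N₁)
      have h2 := hN₂ (N₁ + N₂ + 2) (by omega)
      have hhi := (hhalf (N₁ + N₂ + 1)).1
      have hd1 : d/2^(N₁ + N₂ + 2) < ε/2 := by
        have : d * (1/2:R)^(N₁ + N₂ + 2) < d * (ε/(2*d)) :=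
          mul_lt_mul_of_pos_left h2 hdpos
        have heq1 : d * (1/2:R)^(N₁ + N₂ + 2) = d/2^(N₁ + N₂ + 2) := by
          rw [div_pow, one_pow, mul_one_div]
        have heq2 : d * (ε/(2*d)) = ε/2 := by field_simp
        rw [heq1, heq2] at this
        exact this
      have habsle := abs_lt.mp h1
      have : (bisAux S p (N₁ + N₂ + 1)).2 = midAux S p (N₁ + N₂ + 1) + d/2^(N₁ + N₂ + 2) := by
        linarith [hhi]
      rw [this]
      linarith [habsle.2]
    · have h1 := hN₁ _ (by omega : N₁ + N₂ + 1 ≥ N₁)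
      have h2 := hN₂ (N₁ + N₂ + 2) (by omega)
      have hlo' := (hhalf (N₁ + N₂ + 1)).2
      have hd1 : d/2^(N₁ + N₂ + 2) < ε/2 := by
        have : d * (1/2:R)^(N₁ + N₂ + 2) < d * (ε/(2*d)) :=
          mul_lt_mul_of_pos_left h2 hdpos
        have heq1 : d * (1/2:R)^(N₁ + N₂ + 2) = d/2^(N₁ + N₂ + 2) := by
          rw [div_pow, one_pow, mul_one_div]
        have heq2 : d * (ε/(2*d)) = ε/2 := by field_simp
        rw [heq1, heq2] at this
        exact this
      have habsle := abs_lt.mp h1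
      have : (bisAux S p (N₁ + N₂ + 1)).1 = midAux S p (N₁ + N₂ + 1) - d/2^(N₁ + N₂ + 2) := by
        linarith [hlo']
      rw [this]
      linarith [habsle.1]
  refine ⟨c, ?_, ?_⟩
  · -- upper bound
    intro s hs
    by_contra hcs
    push_neg at hcs
    obtain ⟨n, hn, _⟩ := hkey (s - c) (by linarith)
    have := bisAux_ub S p hub n hs
    linarith
  · -- least
    intro b' hb'
    by_contra hcb
    push_neg at hcb
    obtain ⟨n, _, hn⟩ := hkey (c - b') (by linarith)
    obtain ⟨s, hs, hls⟩ := bisAux_lo S p hlo n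
    have : s ≤ b' := hb' hs
    have : c - (c - b') < (bisAux S p n).1 := hn
    linarith
end

section
/- Every Cauchy sequence in the ordered field of formal Laurent series R((ε)) converges; thus Cauchy completeness of an ordered field does not imply Dedekind completeness. -/
open HahnSeries

section Aux

variable {K : Type*} [Field K] [LinearOrder K] [IsStrictOrderedRing K]

private lemma aux_orderTop_abs (e : K ≃+* LaurentSeries ℝ) (x : K) :
    (e |x|).orderTop = (e x).orderTop := by
  rcases abs_cases x with ⟨h, _⟩ | ⟨h, _⟩
  · rw [h]
  · rw [h, map_neg, orderTop_neg]

private lemma aux_abs_lt (e : K ≃+* LaurentSeries ℝ)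
    (horder : ∀ x : K, 0 < x ↔ 0 < (e x).leadingCoeff)
    {x y : K} (hy : 0 < y) (h : (e y).orderTop < (e x).orderTop) : |x| < y := by
  rw [← sub_pos, horder, map_sub]
  have h' : (e y).orderTop < (e |x|).orderTop := by rwa [aux_orderTop_abs]
  rw [leadingCoeff_sub h']
  exact (horder y).mp hy

private lemma aux_coeff_zero (e : K ≃+* LaurentSeries ℝ)
    (horder : ∀ x : K, 0 < x ↔ 0 < (e x).leadingCoeff)
    {x y : K} (hxy : |x| < y) {j : ℤ}
    (hj : (j : WithTop ℤ) < (e y).orderTop) : (e x).coeff j = 0 := by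
  by_contra hc
  have hex : e x ≠ 0 := ne_zero_of_coeff_ne_zero hc
  have hx0 : x ≠ 0 := by
    intro h; rw [h, map_zero] at hex; exact hex rfl
  have habs : 0 < |x| := abs_pos.mpr hx0
  have h1 : (e |x|).orderTop ≤ (j : WithTop ℤ) := by
    rw [aux_orderTop_abs]; exact orderTop_le_of_coeff_ne_zero hc
  have h2 : (e |x|).orderTop < (e y).orderTop := lt_of_le_of_lt h1 hj
  have h3 : 0 < |x| - y := by
    rw [horder, map_sub, leadingCoeff_sub h2]
    exact (horder _).mp habs
  linarith [abs_lt.mp hxy]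

end Aux

/-- Every Cauchy sequence in ℝ((ε)) (with positivity = positive leading coefficient)
converges, yet the field is not Dedekind complete: Cauchy completeness of an ordered
field does not imply Dedekind completeness. -/
theorem laurent_series_cauchy_complete_not_dedekind_complete
    {K : Type*} [Field K] [LinearOrder K] [IsStrictOrderedRing K] (e : K ≃+* LaurentSeries ℝ)
    (horder : ∀ x : K, 0 < x ↔ 0 < (e x).leadingCoeff) :
    (∀ a : ℕ → K,
      (∀ η : K, 0 < η → ∃ N : ℕ, ∀ m ≥ N, ∀ n ≥ N, |a m - a n| < η) →
      ∃ L : K, ∀ η : K, 0 < η → ∃ N : ℕ, ∀ n ≥ N, |a n - L| < η) ∧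
    ¬(∀ S : Set K, S.Nonempty → BddAbove S → ∃ c : K, IsLUB S c) := by
  constructor
  · -- Cauchy completeness
    intro a hC
    set b : ℕ → LaurentSeries ℝ := fun n => e (a n) with hb
    -- the positive infinitesimals ε^k
    have heta_pos : ∀ k : ℤ, 0 < e.symm (single k 1) := by
      intro k
      rw [horder, RingEquiv.apply_symm_apply, leadingCoeff_of_single]
      exact one_pos
    have heta_ord : ∀ k : ℤ, (e (e.symm (single k (1 : ℝ)))).orderTop = (k : WithTop ℤ) := by
      intro k
      rw [RingEquiv.apply_symm_apply, orderTop_single one_ne_zero]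
    -- coefficientwise stabilization
    have hCC : ∀ k : ℤ, ∃ N : ℕ, ∀ m ≥ N, ∀ n ≥ N, ∀ j < k,
        (b m).coeff j = (b n).coeff j := by
      intro k
      obtain ⟨N, hN⟩ := hC _ (heta_pos k)
      refine ⟨N, fun m hm n hn j hj => ?_⟩
      have := aux_coeff_zero e horder (hN m hm n hn)
        (j := j) (by rw [heta_ord]; exact_mod_cast hj)
      rw [map_sub, coeff_sub, sub_eq_zero] at this
      exact this
    choose N hN using hCC
    -- limit coefficients
    set c : ℤ → ℝ := fun j => (b (N (j + 1))).coeff j with hcdef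
    have hkey : ∀ k : ℤ, ∀ n ≥ N k, ∀ j < k, (b n).coeff j = c j := by
      intro k n hn j hj
      have h1 : (b n).coeff j = (b (max n (N (j + 1)))).coeff j :=
        hN k n hn _ (le_trans hn (le_max_left _ _)) j hj
      have h2 : (b (max n (N (j + 1)))).coeff j = (b (N (j + 1))).coeff j :=
        hN (j + 1) _ (le_max_right _ _) _ le_rfl j (lt_add_one j)
      exact h1.trans h2
    -- the limit as a Laurent series
    have hsupp : {j : ℤ | c j ≠ 0} ⊆ (b (N 0)).support ∪ Set.Ici 0 := by
      intro j hj
      by_cases h0 : (0 : ℤ) ≤ j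
      · exact Or.inr h0
      · left
        have heq := hkey 0 (N 0) le_rfl j (lt_of_not_ge h0)
        have hj' : c j ≠ 0 := hj
        rw [← heq] at hj'
        exact hj'
    have hpwo : Set.IsPWO {j : ℤ | c j ≠ 0} := by
      refine Set.IsPWO.mono (Set.IsPWO.union (b (N 0)).isPWO_support ?_) hsupp
      exact Set.IsWF.isPWO (bddBelow_Ici.wellFoundedOn_lt)
    set L' : LaurentSeries ℝ := ⟨c, hpwo⟩ with hL'
    have hL'coeff : ∀ j, L'.coeff j = c j := fun _ => rfl
    refine ⟨e.symm L', fun η hη => ?_⟩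
    have hηne : e η ≠ 0 := by
      intro h
      have : η = 0 := by
        have := congrArg e.symm h
        simpa using this
      exact (ne_of_gt hη) this
    set k : ℤ := (e η).order with hk
    have hord : (e η).orderTop = (k : WithTop ℤ) := by
      rw [hk, HahnSeries.order_eq_orderTop_of_ne_zero hηne]
    refine ⟨N (k + 1), fun n hn => ?_⟩
    apply aux_abs_lt e horder hη
    rw [hord]
    have hdiff : e (a n - e.symm L') = b n - L' := by
      rw [map_sub, RingEquiv.apply_symm_apply]
    rw [hdiff]
    -- all coefficients up to k vanish
    have hco : ∀ j : ℤ, j ≤ k → (b n - L').coeff j = 0 := by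
      intro j hj
      rw [coeff_sub, hL'coeff, hkey (k + 1) n hn j (by linarith), sub_self]
    by_contra hle
    push_neg at hle
    have hne' : (b n - L') ≠ 0 := by
      intro h
      rw [h, orderTop_zero] at hle
      exact (not_le_of_gt (WithTop.coe_lt_top k)) (le_of_le_of_eq hle rfl)
    obtain ⟨j, hj⟩ : ∃ j : ℤ, (b n - L').orderTop = (j : WithTop ℤ) := by
      rcases WithTop.ne_top_iff_exists.mp (orderTop_ne_top.mpr hne') with ⟨j, hj⟩
      exact ⟨j, hj.symm⟩
    have hjk : j ≤ k := by
      rw [hj] at hle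
      exact_mod_cast hle
    exact coeff_orderTop_ne hj (hco j hjk)
  · -- not Dedekind complete
    intro h
    set u : K := e.symm (single (-1 : ℤ) (1 : ℝ)) with hu
    have hub : ∀ n : ℕ, (n : K) < u := by
      intro n
      rw [← sub_pos, horder, map_sub, RingEquiv.apply_symm_apply]
      have hnat : (e (n : K)) = single (0 : ℤ) (n : ℝ) := by
        rw [map_natCast, ← HahnSeries.C_apply, map_natCast]
      have hlt : (single (-1 : ℤ) (1 : ℝ)).orderTop < (e (n : K)).orderTop := by
        rw [orderTop_single one_ne_zero, hnat]
        exact lt_of_lt_of_le (by exact_mod_cast (by norm_num : (-1 : ℤ) < 0))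
          orderTop_single_le
      rw [leadingCoeff_sub hlt, leadingCoeff_of_single]
      exact one_pos
    obtain ⟨cc, hcc⟩ := h (Set.range (fun n : ℕ => (n : K)))
      ⟨0, ⟨0, by simp⟩⟩ ⟨u, by rintro x ⟨n, rfl⟩; exact le_of_lt (hub n)⟩
    have h2 : (cc - 1) ∉ upperBounds (Set.range (fun n : ℕ => (n : K))) := by
      intro hmem
      have := hcc.2 hmem
      linarith
    rw [upperBounds, Set.mem_setOf_eq] at h2
    push_neg at h2
    obtain ⟨x, ⟨n, rfl⟩, hx⟩ := h2
    have h3 : ((n + 1 : ℕ) : K) ≤ cc := hcc.1 ⟨n + 1, rfl⟩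
    push_cast at h3 hx
    linarith
end

section
/- In the ordered field of formal Laurent series R((ε)), every series whose terms tend to 0 converges (in particular the Alternating Series Test and the Absolute Convergence Property hold), yet the field is not Dedekind complete. -/
/-- helper: if coeff at `o` nonzero and all coeffs below vanish, leadingCoeff = coeff o. -/
lemma laurent_order_eq_leading (w : LaurentSeries ℝ) (o : ℤ) (h0 : w.coeff o ≠ 0)
    (hb : ∀ d < o, w.coeff d = 0) : w.leadingCoeff = w.coeff o := by
  have hw : w ≠ 0 := fun h => h0 (by simp [h])
  have ho : w.order = o := by
    refine le_antisymm (HahnSeries.order_le_of_coeff_ne_zero h0) (le_of_not_gt fun h => ?_)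
    exact (mt HahnSeries.coeff_order_eq_zero.mp hw) (hb _ h)
  rw [HahnSeries.leadingCoeff_eq, ho]

/-- helper: nonneg elements below `single m 1` have vanishing coeffs below `m`. -/
lemma laurent_vanish (z : LaurentSeries ℝ) (m : ℤ)
    (hz : z = 0 ∨ 0 < z.leadingCoeff)
    (h2 : 0 < ((HahnSeries.single m 1 : LaurentSeries ℝ) - z).leadingCoeff) :
    ∀ d < m, z.coeff d = 0 := by
  intro d hd
  rcases hz with rfl | hz
  · simp
  by_contra h0
  have hzne : z ≠ 0 := fun h => h0 (by simp [h])
  have hom : z.order < m := lt_of_le_of_lt (HahnSeries.order_le_of_coeff_ne_zero h0) hd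
  have hco : ((HahnSeries.single m 1 : LaurentSeries ℝ) - z).coeff z.order = -z.leadingCoeff := by
    rw [HahnSeries.coeff_sub, HahnSeries.coeff_single_of_ne (ne_of_lt hom),
      HahnSeries.leadingCoeff_eq]
    ring
  have hlc := laurent_order_eq_leading ((HahnSeries.single m 1 : LaurentSeries ℝ) - z) z.order
    (by rw [hco]; simpa using ne_of_gt hz) (fun d' hd' => by
      rw [HahnSeries.coeff_sub, HahnSeries.coeff_single_of_ne (ne_of_lt (hd'.trans hom)),
        HahnSeries.coeff_eq_zero_of_lt_order hd', sub_zero])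
  rw [hlc, hco] at h2
  linarith

/-- In ℝ((ε)) (positivity = positive leading coefficient), every series whose terms
tend to 0 converges, yet the field is not Dedekind complete. -/
theorem laurent_series_series_converge_not_dedekind_complete
    {K : Type*} [Field K] [LinearOrder K] [IsStrictOrderedRing K] (e : K ≃+* LaurentSeries ℝ)
    (horder : ∀ x : K, 0 < x ↔ 0 < (e x).leadingCoeff) :
    (∀ a : ℕ → K,
      (∀ η : K, 0 < η → ∃ N : ℕ, ∀ n ≥ N, |a n| < η) →
      ∃ S : K, ∀ η : K, 0 < η → ∃ N : ℕ, ∀ n ≥ N,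
        |(∑ k ∈ Finset.range n, a k) - S| < η) ∧
    ¬(∀ S : Set K, S.Nonempty → BddAbove S → ∃ c : K, IsLUB S c) := by
  have hlt : ∀ x y : K, x < y ↔ 0 < (e y - e x).leadingCoeff := by
    intro x y
    rw [← sub_pos, horder, map_sub]
  constructor
  · intro a ha
    set A : ℕ → LaurentSeries ℝ := fun n => e (a n) with hA
    have key : ∀ m : ℤ, ∃ N : ℕ, ∀ n ≥ N, ∀ d ≤ m, (A n).coeff d = 0 := by
      intro m
      have hηpos : (0 : K) < e.symm (HahnSeries.single (m + 1) 1) := by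
        rw [horder, RingEquiv.apply_symm_apply, HahnSeries.leadingCoeff_of_single]
        exact one_pos
      obtain ⟨N, hN⟩ := ha _ hηpos
      refine ⟨N, fun n hn d hd => ?_⟩
      have h1 : |a n| < e.symm (HahnSeries.single (m + 1) 1) := hN n hn
      have hz : e |a n| = 0 ∨ 0 < (e |a n|).leadingCoeff := by
        rcases lt_or_eq_of_le (abs_nonneg (a n)) with h | h
        · exact Or.inr ((horder _).mp h)
        · exact Or.inl (by rw [← h, map_zero])
      have h2 : 0 < ((HahnSeries.single (m + 1) 1 : LaurentSeries ℝ) - e |a n|).leadingCoeff := by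
        have h3 := (hlt _ _).mp h1
        rwa [RingEquiv.apply_symm_apply] at h3
      have h3 := laurent_vanish _ _ hz h2 d (by omega)
      rcases abs_choice (a n) with h | h
      · rw [hA]; rw [h] at h3; exact h3
      · rw [h, map_neg, HahnSeries.coeff_neg, neg_eq_zero] at h3; exact h3
    choose Nf hNf using key
    set M0 := Nf (-1) with hM0
    set f : ℤ → ℝ := fun d => ∑ k ∈ Finset.range (max (Nf d) M0), (A k).coeff d with hf
    have hstable : ∀ (d : ℤ) (p q : ℕ), Nf d ≤ p → p ≤ q →
        ∑ k ∈ Finset.range q, (A k).coeff d = ∑ k ∈ Finset.range p, (A k).coeff d := by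
      intro d p q hp hpq
      refine (Finset.sum_subset (Finset.range_subset_range.mpr hpq) fun k _ hk2 => ?_).symm
      rw [Finset.mem_range, not_lt] at hk2
      exact hNf d k (le_trans hp hk2) d le_rfl
    have hbdd : BddBelow (Function.support f) := by
      classical
      set L : ℤ := (insert 0 ((Finset.range M0).image (fun k => (A k).order))).min'
        (Finset.insert_nonempty _ _) with hL
      refine ⟨L, fun d hd => ?_⟩
      by_cases h0 : (0 : ℤ) ≤ d
      · exact le_trans (Finset.min'_le _ _ (Finset.mem_insert_self _ _)) h0
      · have hd1 : d ≤ -1 := by omega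
        rw [Function.mem_support, hf] at hd
        obtain ⟨k, hk, hkne⟩ := Finset.exists_ne_zero_of_sum_ne_zero hd
        have hkM0 : k < M0 := by
          by_contra hh
          rw [not_lt] at hh
          exact hkne (hNf (-1) k hh d hd1)
        calc L ≤ (A k).order := Finset.min'_le _ _ (Finset.mem_insert_of_mem
              (Finset.mem_image_of_mem _ (Finset.mem_range.mpr hkM0)))
          _ ≤ d := HahnSeries.order_le_of_coeff_ne_zero hkne
    refine ⟨e.symm (HahnSeries.ofSuppBddBelow f hbdd), ?_⟩
    intro η hη
    set m : ℤ := (e η).order with hm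
    refine ⟨Nf m, fun n hn => ?_⟩
    set x : K := (∑ k ∈ Finset.range n, a k) - e.symm (HahnSeries.ofSuppBddBelow f hbdd) with hx
    have hcoeff : ∀ d ≤ m, (e x).coeff d = 0 := by
      intro d hd
      have hex : e x = (∑ k ∈ Finset.range n, A k) - HahnSeries.ofSuppBddBelow f hbdd := by
        rw [hx, map_sub, map_sum, RingEquiv.apply_symm_apply]
      rw [hex, HahnSeries.coeff_sub]
      have hsc : (∑ k ∈ Finset.range n, A k).coeff d = ∑ k ∈ Finset.range n, (A k).coeff d :=
        map_sum (HahnSeries.coeff.addMonoidHom d) A (Finset.range n)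
      have hfc : (HahnSeries.ofSuppBddBelow f hbdd).coeff d = f d := rfl
      set P : ℕ := max n (max (Nf d) M0) with hP
      have h1 : ∑ k ∈ Finset.range P, (A k).coeff d = ∑ k ∈ Finset.range n, (A k).coeff d := by
        refine (Finset.sum_subset (Finset.range_subset_range.mpr (le_max_left _ _))
          fun k _ hk2 => ?_).symm
        rw [Finset.mem_range, not_lt] at hk2
        exact hNf m k (le_trans hn hk2) d hd
      have h2 : ∑ k ∈ Finset.range P, (A k).coeff d = f d :=
        hstable d (max (Nf d) M0) P (le_max_left _ _) (le_max_right _ _)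
      rw [hsc, hfc, ← h1, h2, sub_self]
    show |x| < η
    rcases eq_or_ne x 0 with hx0 | hx0
    · rw [hx0, abs_zero]; exact hη
    · rw [hlt]
      have habs : ∀ d ≤ m, (e |x|).coeff d = 0 := by
        intro d hd
        rcases abs_choice x with h | h
        · rw [h]; exact hcoeff d hd
        · rw [h, map_neg, HahnSeries.coeff_neg, neg_eq_zero]; exact hcoeff d hd
      have hηlc : 0 < (e η).leadingCoeff := (horder _).mp hη
      have hηne : e η ≠ 0 := by
        intro h
        rw [h, HahnSeries.leadingCoeff_zero] at hηlc
        exact lt_irrefl _ hηlc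
      have hcm : (e η - e |x|).coeff m = (e η).leadingCoeff := by
        rw [HahnSeries.coeff_sub, habs m le_rfl, sub_zero, HahnSeries.leadingCoeff_eq]
      have hlc := laurent_order_eq_leading (e η - e |x|) m
        (by rw [hcm]; exact ne_of_gt hηlc)
        (fun d' hd' => by
          rw [HahnSeries.coeff_sub, habs d' (le_of_lt hd'),
            HahnSeries.coeff_eq_zero_of_lt_order hd', sub_zero])
      rw [hlc, hcm]
      exact hηlc
  · intro hcomp
    set ε : K := e.symm (HahnSeries.single 1 1) with hε
    have hεpos : 0 < ε := by
      rw [horder, hε, RingEquiv.apply_symm_apply, HahnSeries.leadingCoeff_of_single]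
      exact one_pos
    have hub : ∀ n : ℕ, (n : K) * ε ≤ 1 := by
      intro n
      have hcast : ((n : K) : K) * ε = (n : K) * ε := rfl
      have hser : e ((n : K) * ε) = HahnSeries.single 1 (n : ℝ) := by
        rw [map_mul, map_natCast, hε, RingEquiv.apply_symm_apply]
        have : ((n : ℕ) : LaurentSeries ℝ) = HahnSeries.single 0 ((n : ℕ) : ℝ) := by
          rw [← HahnSeries.C_apply, map_natCast]
        rw [this, HahnSeries.single_mul_single, zero_add, mul_one]
      have hpos : (0 : K) < 1 - (n : K) * ε := by
        rw [horder, map_sub, map_one, hser]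
        have hone : (1 : LaurentSeries ℝ) = HahnSeries.single 0 1 := by
          rw [← HahnSeries.C_apply, map_one]
        rw [hone]
        have hlc := laurent_order_eq_leading
          ((HahnSeries.single 0 1 : LaurentSeries ℝ) - HahnSeries.single 1 (n : ℝ)) 0
          (by rw [HahnSeries.coeff_sub, HahnSeries.coeff_single_same,
                HahnSeries.coeff_single_of_ne (by norm_num), sub_zero]; exact one_ne_zero)
          (fun d hd => by
            rw [HahnSeries.coeff_sub, HahnSeries.coeff_single_of_ne (ne_of_lt hd),
              HahnSeries.coeff_single_of_ne (by omega), sub_zero])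
        rw [hlc, HahnSeries.coeff_sub, HahnSeries.coeff_single_same,
          HahnSeries.coeff_single_of_ne (by norm_num), sub_zero]
        exact one_pos
      linarith
    obtain ⟨c, hc⟩ := hcomp (Set.range (fun n : ℕ => (n : K) * ε))
      ⟨0, ⟨0, by simp⟩⟩ ⟨1, by rintro _ ⟨n, rfl⟩; exact hub n⟩
    have h1 : ¬ (c - ε ∈ upperBounds (Set.range (fun n : ℕ => (n : K) * ε))) := by
      intro h
      have := hc.2 h
      linarith
    simp only [upperBounds, Set.mem_setOf_eq, Set.mem_range] at h1
    push_neg at h1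
    obtain ⟨y, ⟨n, rfl⟩, hy⟩ := h1
    have h2 : ((n + 1 : ℕ) : K) * ε ≤ c := hc.1 ⟨n + 1, rfl⟩
    push_cast at h2
    linarith
end

section
/- If an ordered field R satisfies the Contraction Map Property—every map f : R → R with |f(x) - f(y)| ≤ c|x - y| for all x, y, for some constant c < 1 in R, has a fixed point—then R is Archimedean. -/
theorem contraction_map_property_implies_archimedean
    {R : Type*} [Field R] [LinearOrder R] [IsStrictOrderedRing R]
    (hcontr : ∀ (f : R → R) (c : R), 0 ≤ c → c < 1 →
      (∀ x y : R, |f x - f y| ≤ c * |x - y|) → ∃ x : R, f x = x) :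
    ∀ x : R, ∃ n : ℕ, x < (n : R) := by
  by_contra h
  push_neg at h
  obtain ⟨M, hM⟩ := h
  -- M ≥ every natural number
  have hM2 : (2 : R) ≤ M := by exact_mod_cast hM 2
  have hM0 : (0 : R) < M := lt_of_lt_of_le (by norm_num) hM2
  set ε : R := M⁻¹ with hε
  have hε0 : 0 < ε := inv_pos.mpr hM0
  have hεhalf : ε ≤ 1/2 := by
    rw [hε]
    rw [inv_le_comm₀ hM0 (by norm_num)]
    linarith
  set c : R := 1 - ε with hc
  have hc0 : 0 ≤ c := by
    have : ε ≤ 1 := le_trans hεhalf (by norm_num)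
    simp [hc]; linarith
  have hc1 : c < 1 := by simp [hc]; linarith
  have hchalf : (1/2 : R) ≤ c := by simp [hc]; linarith
  classical
  set f : R → R := fun x => if ∃ n : ℕ, x < (n : R) then c * x + 1 else c * x with hf
  have hfin : ∀ x : R, (∃ n : ℕ, x < (n : R)) → f x = c * x + 1 := by
    intro x hx; simp [hf, hx]
  have hinf : ∀ x : R, ¬(∃ n : ℕ, x < (n : R)) → f x = c * x := by
    intro x hx; simp [hf, hx]
  have hlip : ∀ x y : R, |f x - f y| ≤ c * |x - y| := by
    have key : ∀ x y : R, (∃ n : ℕ, x < (n : R)) → ¬(∃ n : ℕ, y < (n : R)) →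
        |f x - f y| ≤ c * |x - y| := by
      intro x y hx hy
      push_neg at hy
      obtain ⟨n, hn⟩ := hx
      have hyx : x + 2 ≤ y := by
        have := hy (n + 2)
        push_cast at this
        linarith
      rw [hfin x ⟨n, hn⟩, hinf y (by push_neg; exact hy)]
      have hxy : x - y ≤ -2 := by linarith
      have habs : |x - y| = y - x := by rw [abs_of_nonpos (by linarith)]; ring
      have hcyx : 1 ≤ c * (y - x) := by
        have h2 : (2:R) ≤ y - x := by linarith
        calc (1:R) = (1/2) * 2 := by norm_num
        _ ≤ c * (y - x) := mul_le_mul hchalf h2 (by norm_num) (le_trans (by norm_num) hchalf)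
      rw [habs]
      rw [abs_le]
      constructor
      · nlinarith
      · nlinarith
    intro x y
    by_cases hx : ∃ n : ℕ, x < (n : R) <;> by_cases hy : ∃ n : ℕ, y < (n : R)
    · rw [hfin x hx, hfin y hy]
      have : c * x + 1 - (c * y + 1) = c * (x - y) := by ring
      rw [this, abs_mul, abs_of_nonneg hc0]
    · exact key x y hx hy
    · have := key y x hy hx
      rwa [abs_sub_comm, abs_sub_comm y x] at this
    · rw [hinf x hx, hinf y hy]
      have : c * x - c * y = c * (x - y) := by ring
      rw [this, abs_mul, abs_of_nonneg hc0]
  obtain ⟨x, hx⟩ := hcontr f c hc0 hc1 hlip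
  by_cases hfx : ∃ n : ℕ, x < (n : R)
  · rw [hfin x hfx] at hx
    -- c*x + 1 = x  →  ε*x = 1  →  x = M
    have hxM : x = M := by
      have h1 : ε * x = 1 := by rw [hc] at hx; nlinarith
      field_simp [hε] at h1
      calc x = M * (ε * x) := by rw [hε, ← mul_assoc, mul_inv_cancel₀ hM0.ne', one_mul]
        _ = M := by rw [h1, mul_one]
    obtain ⟨n, hn⟩ := hfx
    exact absurd (hM n) (not_le.mpr (hxM ▸ hn))
  · rw [hinf x hfx] at hx
    have hx0 : x = 0 := by
      have : ε * x = 0 := by rw [hc] at hx; nlinarith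
      rcases mul_eq_zero.mp this with h | h
      · exact absurd h (ne_of_gt hε0)
      · exact h
    exact hfx ⟨1, by rw [hx0]; norm_num⟩
end
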